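/- Let a,b>0, p>6, λ>0, h≥0 a potential. For every u∈M_λ and every pair (s,t)∈(0,∞)×(0,∞) with (s,t)≠(1,1), one has J_λ(u)>J_λ(su⁺+tu⁻). -/

import Mathlib

open scoped BigOperators
open Filter

namespace DiscreteKirchhoff

/-- Vertices of the lattice graph ℤ³. -/
abbrev V := Fin 3 → ℤ

/-- Adjacency on ℤ³: x ∼ y iff ∑ᵢ |xᵢ - yᵢ| = 1. -/
def adj (x y : V) : Prop := (∑ i, |x i - y i|) = 1

instance (x y : V) : Decidable (adj x y) :=
  inferInstanceAs (Decidable ((∑ i, |x i - y i|) = 1))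

/-- Graph Laplacian: Δu(x) = ∑_{y∼x} (u(y) - u(x)). -/
noncomputable def lap (u : V → ℝ) (x : V) : ℝ :=
  ∑' y : V, if adj x y then u y - u x else 0

/-- Gradient form: ∇u∇v(x) = (1/2) ∑_{y∼x} (u(y)-u(x))(v(y)-v(x)). -/
noncomputable def gradForm (u v : V → ℝ) (x : V) : ℝ :=
  (1/2) * ∑' y : V, if adj x y then (u y - u x) * (v y - v x) else 0

/-- |∇u|²(x). -/
noncomputable def gradSq (u : V → ℝ) (x : V) : ℝ := gradForm u u x

/-- Positive part u⁺ = max(u,0). -/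
noncomputable def pos (u : V → ℝ) : V → ℝ := fun x => max (u x) 0

/-- Negative part u⁻ = min(u,0). -/
noncomputable def neg (u : V → ℝ) : V → ℝ := fun x => min (u x) 0

/-- K_V(u) = ∑_x ∑_{y∼x} [u⁺(x)u⁻(y) + u⁻(x)u⁺(y)]. -/
noncomputable def KV (u : V → ℝ) : ℝ :=
  ∑' x : V, ∑' y : V, if adj x y then pos u x * neg u y + neg u x * pos u y else 0

/-- |t|^p log t², taken to be 0 at t = 0. -/
noncomputable def logTerm (p t : ℝ) : ℝ :=
  if t = 0 then 0 else |t| ^ p * Real.log (t ^ 2)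

/-- |t|^{p-2} t log t², taken to be 0 at t = 0. -/
noncomputable def nlTerm (p t : ℝ) : ℝ :=
  if t = 0 then 0 else |t| ^ (p - 2) * t * Real.log (t ^ 2)

/-- Membership in the space ℋ_λ (independent of λ > 0). -/
def memH (h u : V → ℝ) : Prop :=
  Summable (fun x => gradSq u x + (u x) ^ 2) ∧ Summable (fun x => h x * (u x) ^ 2)

/-- h_λ(x) = λ h(x) + 1. -/
noncomputable def hl (lam : ℝ) (h : V → ℝ) (x : V) : ℝ := lam * h x + 1

/-- Squared norm in ℋ_λ. -/
noncomputable def normHlamSq (a lam : ℝ) (h u : V → ℝ) : ℝ :=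
  ∑' x : V, (a * gradSq u x + hl lam h x * (u x) ^ 2)

/-- Squared H¹ norm. -/
noncomputable def normH1Sq (u : V → ℝ) : ℝ :=
  ∑' x : V, (gradSq u x + (u x) ^ 2)

/-- Inner product in ℋ_λ. -/
noncomputable def innerHlam (a lam : ℝ) (h u v : V → ℝ) : ℝ :=
  ∑' x : V, (a * gradForm u v x + hl lam h x * u x * v x)

/-- The energy functional J_λ. -/
noncomputable def Jlam (a b p lam : ℝ) (h u : V → ℝ) : ℝ :=
  (1/2) * normHlamSq a lam h u
  + (b/4) * (∑' x : V, gradSq u x) ^ 2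
  + (2/p^2) * ∑' x : V, |u x| ^ p
  - (1/p) * ∑' x : V, logTerm p (u x)

/-- The pairing (J′_λ(u), φ). -/
noncomputable def Jp (a b p lam : ℝ) (h u φ : V → ℝ) : ℝ :=
  (∑' x : V, (a * gradForm u φ x + hl lam h x * u x * φ x))
  + b * (∑' x : V, gradSq u x) * (∑' x : V, gradForm u φ x)
  - ∑' x : V, nlTerm p (u x) * φ x

/-- The Nehari manifold N_λ. -/
def NSet (a b p lam : ℝ) (h : V → ℝ) : Set (V → ℝ) :=
  {u | memH h u ∧ u ≠ 0 ∧ Jp a b p lam h u u = 0}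

/-- The sign-changing Nehari set M_λ. -/
def MSet (a b p lam : ℝ) (h : V → ℝ) : Set (V → ℝ) :=
  {u | memH h u ∧ pos u ≠ 0 ∧ neg u ≠ 0 ∧
       Jp a b p lam h u (pos u) = 0 ∧ Jp a b p lam h u (neg u) = 0}

/-- c_λ = inf_{N_λ} J_λ. -/
noncomputable def cLam (a b p lam : ℝ) (h : V → ℝ) : ℝ :=
  sInf (Jlam a b p lam h '' NSet a b p lam h)

/-- m_λ = inf_{M_λ} J_λ. -/
noncomputable def mLam (a b p lam : ℝ) (h : V → ℝ) : ℝ :=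
  sInf (Jlam a b p lam h '' MSet a b p lam h)

/-- Graph-connectedness of a subset of ℤ³. -/
def connectedIn (S : Set V) : Prop :=
  ∀ x ∈ S, ∀ y ∈ S, Relation.ReflTransGen (fun z w => adj z w ∧ w ∈ S) x y

/-- Hypothesis (h₁): h ≥ 0 and Ω = {h = 0} is nonempty, connected and finite. -/
def hypH1 (h : V → ℝ) : Prop :=
  (∀ x, 0 ≤ h x) ∧ {x | h x = 0}.Nonempty ∧ connectedIn {x | h x = 0} ∧ {x | h x = 0}.Finite

/-- Hypothesis (h₂): the sublevel set {h < M} is finite for some M > 0. -/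
def hypH2 (h : V → ℝ) : Prop :=
  ∃ M > 0, {x | h x < M}.Finite

/-- u solves the discrete logarithmic Kirchhoff equation pointwise on ℤ³. -/
def solvesEq (a b p lam : ℝ) (h u : V → ℝ) : Prop :=
  ∀ x : V, -(a + b * ∑' y : V, gradSq u y) * lap u x + hl lam h x * u x = nlTerm p (u x)

/-- Vertex boundary of a subset of ℤ³. -/
def bdry (S : Set V) : Set V := {y | y ∉ S ∧ ∃ x ∈ S, adj x y}

/-- ℋ¹₀(Ω): functions vanishing outside Ω. -/
def H10 (S : Set V) : Set (V → ℝ) := {u | ∀ x, x ∉ S → u x = 0}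

/-- The energy functional J_Ω. -/
noncomputable def JOm (a b p : ℝ) (S : Set V) (u : V → ℝ) : ℝ :=
  (1/2) * ∑' x : V, (S ∪ bdry S).indicator (fun x => a * gradSq u x) x
  + (1/2) * ∑' x : V, S.indicator (fun x => (u x) ^ 2) x
  + (b/4) * (∑' x : V, (S ∪ bdry S).indicator (gradSq u) x) ^ 2
  + (2/p^2) * ∑' x : V, S.indicator (fun x => |u x| ^ p) x
  - (1/p) * ∑' x : V, S.indicator (fun x => logTerm p (u x)) x

/-- The pairing (J′_Ω(u), φ). -/
noncomputable def JOmp (a b p : ℝ) (S : Set V) (u φ : V → ℝ) : ℝ :=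
  (∑' x : V, (S ∪ bdry S).indicator (fun x => a * gradForm u φ x) x)
  + (∑' x : V, S.indicator (fun x => u x * φ x) x)
  + b * (∑' x : V, (S ∪ bdry S).indicator (gradSq u) x)
      * (∑' x : V, (S ∪ bdry S).indicator (gradForm u φ) x)
  - ∑' x : V, S.indicator (fun x => nlTerm p (u x) * φ x) x

/-- The Nehari manifold N_Ω. -/
def NOm (a b p : ℝ) (S : Set V) : Set (V → ℝ) :=
  {u | u ∈ H10 S ∧ u ≠ 0 ∧ JOmp a b p S u u = 0}

/-- The sign-changing Nehari set M_Ω. -/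
def MOm (a b p : ℝ) (S : Set V) : Set (V → ℝ) :=
  {u | u ∈ H10 S ∧ pos u ≠ 0 ∧ neg u ≠ 0 ∧
       JOmp a b p S u (pos u) = 0 ∧ JOmp a b p S u (neg u) = 0}

/-- c_Ω. -/
noncomputable def cOm (a b p : ℝ) (S : Set V) : ℝ :=
  sInf (JOm a b p S '' NOm a b p S)

/-- m_Ω. -/
noncomputable def mOm (a b p : ℝ) (S : Set V) : ℝ :=
  sInf (JOm a b p S '' MOm a b p S)

/-- u solves the limiting equation pointwise on Ω. -/
def solvesEqOm (a b p : ℝ) (S : Set V) (u : V → ℝ) : Prop :=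
  ∀ x ∈ S, -(a + b * ∑' y : V, (S ∪ bdry S).indicator (gradSq u) y) * lap u x + u x
      = nlTerm p (u x)


/-! ### Auxiliary lemmas for stmt10 -/

/-- The finite set of potential neighbors of a vertex. -/
def nbrFinset (x : V) : Finset V :=
  Fintype.piFinset (fun i => ({x i - 1, x i, x i + 1} : Finset ℤ))

lemma adj_mem_nbrFinset {x y : V} (hxy : adj x y) : y ∈ nbrFinset x := by
  rw [nbrFinset, Fintype.mem_piFinset]
  intro i
  have h1 : |x i - y i| ≤ 1 := by
    rw [← hxy]
    exact Finset.single_le_sum (f := fun j => |x j - y j|) (fun j _ => abs_nonneg _) (Finset.mem_univ i)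
  simp only [Finset.mem_insert, Finset.mem_singleton]
  rw [abs_le] at h1
  omega

lemma summable_nbr (x : V) (f : V → ℝ) :
    Summable (fun y => if adj x y then f y else 0) := by
  apply summable_of_ne_finset_zero (s := nbrFinset x)
  intro y hy
  simp only [ite_eq_right_iff]
  intro hadj
  exact absurd (adj_mem_nbrFinset hadj) hy

lemma gradForm_comm (f g : V → ℝ) (x : V) : gradForm f g x = gradForm g f x := by
  unfold gradForm
  congr 1
  apply tsum_congr
  intro y
  split <;> ring

lemma gradForm_smul_add_left (c d : ℝ) (f g k : V → ℝ) (x : V) :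
    gradForm (fun z => c * f z + d * g z) k x
      = c * gradForm f k x + d * gradForm g k x := by
  unfold gradForm
  have h1 : (fun y => if adj x y then
        ((c * f y + d * g y) - (c * f x + d * g x)) * (k y - k x) else 0)
      = (fun y => (if adj x y then c * ((f y - f x) * (k y - k x)) else 0)
          + (if adj x y then d * ((g y - g x) * (k y - k x)) else 0)) := by
    funext y
    by_cases hxy : adj x y <;> simp [hxy] <;> ring
  rw [h1, Summable.tsum_add (summable_nbr x _) (summable_nbr x _)]
  have h2 : (fun y => if adj x y then c * ((f y - f x) * (k y - k x)) else 0)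
      = (fun y => c * (if adj x y then (f y - f x) * (k y - k x) else 0)) := by
    funext y; by_cases hxy : adj x y <;> simp [hxy]
  have h3 : (fun y => if adj x y then d * ((g y - g x) * (k y - k x)) else 0)
      = (fun y => d * (if adj x y then (g y - g x) * (k y - k x) else 0)) := by
    funext y; by_cases hxy : adj x y <;> simp [hxy]
  rw [h2, h3, tsum_mul_left, tsum_mul_left]
  ring

lemma gradSq_expand (c d : ℝ) (f g : V → ℝ) (x : V) :
    gradSq (fun z => c * f z + d * g z) x
      = c ^ 2 * gradSq f x + 2 * (c * d) * gradForm f g x + d ^ 2 * gradSq g x := by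
  unfold gradSq
  rw [gradForm_smul_add_left,
    gradForm_comm f (fun z => c * f z + d * g z), gradForm_smul_add_left,
    gradForm_comm g (fun z => c * f z + d * g z), gradForm_smul_add_left,
    gradForm_comm g f]
  ring

lemma gradForm_decomp_left (u k : V → ℝ) (x : V) :
    gradForm u k x = gradForm (pos u) k x + gradForm (neg u) k x := by
  have hu : u = fun z => 1 * pos u z + 1 * neg u z := by
    funext z
    simp only [one_mul, pos, neg]
    rcases le_total (u z) 0 with hz | hz
    · rw [max_eq_right hz, min_eq_left hz]; ring
    · rw [max_eq_left hz, min_eq_right hz]; ring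
  conv_lhs => rw [hu]
  rw [gradForm_smul_add_left]
  ring

lemma gradSq_nonneg (f : V → ℝ) (x : V) : 0 ≤ gradSq f x := by
  unfold gradSq gradForm
  apply mul_nonneg (by norm_num)
  apply tsum_nonneg
  intro y
  by_cases hxy : adj x y <;> simp [hxy, mul_self_nonneg]
lemma pos_add_neg (u : V → ℝ) (x : V) : pos u x + neg u x = u x := by
  simp only [pos, neg]
  rcases le_total (u x) 0 with hz | hz
  · rw [max_eq_right hz, min_eq_left hz]; ring
  · rw [max_eq_left hz, min_eq_right hz]; ring

lemma pos_mul_neg (u : V → ℝ) (x : V) : pos u x * neg u x = 0 := by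
  simp only [pos, neg]
  rcases le_total (u x) 0 with hz | hz
  · rw [max_eq_right hz, zero_mul]
  · rw [min_eq_right hz, mul_zero]

lemma pos_nonneg' (u : V → ℝ) (x : V) : 0 ≤ pos u x := le_max_right _ _

lemma neg_nonpos' (u : V → ℝ) (x : V) : neg u x ≤ 0 := min_le_right _ _

lemma pos_sq_add_neg_sq (u : V → ℝ) (x : V) : pos u x ^ 2 + neg u x ^ 2 = u x ^ 2 := by
  have h1 := pos_add_neg u x
  have h2 := pos_mul_neg u x
  linear_combination (pos u x + neg u x + u x) * h1 - 2 * h2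

lemma mul_pos_self (u : V → ℝ) (x : V) : u x * pos u x = pos u x ^ 2 := by
  have h1 := pos_add_neg u x
  have h2 := pos_mul_neg u x
  linear_combination (-(pos u x)) * h1 + h2

lemma mul_neg_self (u : V → ℝ) (x : V) : u x * neg u x = neg u x ^ 2 := by
  have h1 := pos_add_neg u x
  have h2 := pos_mul_neg u x
  linear_combination (-(neg u x)) * h1 + h2

lemma gradForm_pos_neg_nonneg (u : V → ℝ) (x : V) : 0 ≤ gradForm (pos u) (neg u) x := by
  unfold gradForm
  apply mul_nonneg (by norm_num)
  apply tsum_nonneg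
  intro y
  by_cases hxy : adj x y
  · simp only [hxy, if_true]
    rcases le_total (u x) (u y) with hz | hz
    · apply mul_nonneg
      · simp only [pos, sub_nonneg]; exact max_le_max hz le_rfl
      · simp only [neg, sub_nonneg]; exact min_le_min hz le_rfl
    · have hA : pos u y - pos u x ≤ 0 := by
        simp only [pos, sub_nonpos]; exact max_le_max hz le_rfl
      have hB : neg u y - neg u x ≤ 0 := by
        simp only [neg, sub_nonpos]; exact min_le_min hz le_rfl
      have hAB := mul_nonneg (neg_nonneg.2 hA) (neg_nonneg.2 hB)
      rw [neg_mul_neg] at hAB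
      exact hAB
  · simp [hxy]

lemma abs_pos_le_abs (u : V → ℝ) (x : V) : |pos u x| ≤ |u x| := by
  simp only [pos]
  rcases le_total (u x) 0 with hz | hz
  · rw [max_eq_right hz]; simp [abs_nonneg]
  · rw [max_eq_left hz]

lemma abs_neg_le_abs (u : V → ℝ) (x : V) : |neg u x| ≤ |u x| := by
  simp only [neg]
  rcases le_total (u x) 0 with hz | hz
  · rw [min_eq_left hz]
  · rw [min_eq_right hz]; simp [abs_nonneg]
lemma sq_rpow_eq {s q : ℝ} (hs : 0 ≤ s) : (s ^ 2) ^ q = s ^ (2 * q) := by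
  rw [← Real.rpow_natCast s 2, ← Real.rpow_mul hs]
  norm_num

/-- Young-type inequality via Bernoulli: `s^p ≥ 1 + (p/2)(s²-1)`. -/
lemma rpow_ge_bern {p s : ℝ} (hp : 2 ≤ p) (hs : 0 ≤ s) :
    1 + (p / 2) * (s ^ 2 - 1) ≤ s ^ p := by
  have hb := one_add_mul_self_le_rpow_one_add
    (show (-1:ℝ) ≤ s ^ 2 - 1 by nlinarith [sq_nonneg s]) (show (1:ℝ) ≤ p / 2 by linarith)
  have he : (1:ℝ) + (s ^ 2 - 1) = s ^ 2 := by ring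
  rw [he] at hb
  rw [sq_rpow_eq hs] at hb
  have : 2 * (p / 2) = p := by ring
  rw [this] at hb
  exact hb

lemma psi_nonneg {p s : ℝ} (hp : 2 < p) (hs : 0 ≤ s) :
    0 ≤ 1 / 2 - 1 / p - s ^ 2 / 2 + s ^ p / p := by
  have hp0 : (0:ℝ) < p := by linarith
  have hb := rpow_ge_bern hp.le hs
  have h0 : (1 / 2 - 1 / p - s ^ 2 / 2 + s ^ p / p) * p
      = s ^ p - 1 - (p / 2) * (s ^ 2 - 1) := by
    field_simp
    ring
  have h2 : 0 ≤ (1 / 2 - 1 / p - s ^ 2 / 2 + s ^ p / p) * p := by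
    rw [h0]; linarith
  exact (mul_nonneg_iff_of_pos_right hp0).mp h2

lemma phi_eq {p s : ℝ} (hp : 0 < p) (hs : 0 < s) :
    (2 / p ^ 2) * (1 - s ^ p) + (1 / p) * (s ^ p * Real.log (s ^ 2))
      = (2 / p ^ 2) * (s ^ p * (s ^ (-p) - 1 + p * Real.log s)) := by
  have h1 : s ^ p * s ^ (-p) = 1 := by
    rw [← Real.rpow_add hs]; simp
  have h2 : Real.log (s ^ 2) = 2 * Real.log s := by
    rw [Real.log_pow]; norm_num
  rw [h2]
  have hp0 : p ≠ 0 := ne_of_gt hp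
  field_simp
  linear_combination (-1) * h1

lemma exp_aux {z : ℝ} : 0 ≤ Real.exp (-z) - 1 + z := by
  have := Real.add_one_le_exp (-z)
  linarith

lemma exp_aux_strict {z : ℝ} (hz : z ≠ 0) : 0 < Real.exp (-z) - 1 + z := by
  have := Real.add_one_lt_exp (neg_ne_zero.2 hz)
  linarith

lemma phi_core_nonneg {p s : ℝ} (hp : 0 < p) (hs : 0 < s) :
    0 ≤ s ^ (-p) - 1 + p * Real.log s := by
  have he : s ^ (-p) = Real.exp (-(p * Real.log s)) := by
    rw [Real.rpow_def_of_pos hs]; ring_nf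
  rw [he]
  exact exp_aux

lemma phi_core_pos {p s : ℝ} (hp : 0 < p) (hs : 0 < s) (hs1 : s ≠ 1) :
    0 < s ^ (-p) - 1 + p * Real.log s := by
  have he : s ^ (-p) = Real.exp (-(p * Real.log s)) := by
    rw [Real.rpow_def_of_pos hs]; ring_nf
  rw [he]
  apply exp_aux_strict
  have hlog : Real.log s ≠ 0 := by
    intro hcon
    rcases (Real.log_eq_zero).1 hcon with h0 | h0 | h0 <;> [linarith; exact hs1 h0; linarith]
  exact mul_ne_zero (ne_of_gt hp) hlog

lemma phi_nonneg {p s : ℝ} (hp : 0 < p) (hs : 0 < s) :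
    0 ≤ (2 / p ^ 2) * (1 - s ^ p) + (1 / p) * (s ^ p * Real.log (s ^ 2)) := by
  rw [phi_eq hp hs]
  apply mul_nonneg (by positivity)
  exact mul_nonneg (Real.rpow_nonneg hs.le p) (phi_core_nonneg hp hs)

lemma phi_pos {p s : ℝ} (hp : 0 < p) (hs : 0 < s) (hs1 : s ≠ 1) :
    0 < (2 / p ^ 2) * (1 - s ^ p) + (1 / p) * (s ^ p * Real.log (s ^ 2)) := by
  rw [phi_eq hp hs]
  apply mul_pos (by positivity)
  exact mul_pos (Real.rpow_pos_of_pos hs p) (phi_core_pos hp hs hs1)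
lemma rpow_two_eq {x : ℝ} (hx : 0 ≤ x) : x ^ (2:ℝ) = x ^ 2 := by
  rw [← Real.rpow_natCast x 2]; norm_num

lemma abs_rpow_le_of_le {q M : ℝ} (hq : 2 < q) (t : ℝ) (hM : |t| ≤ M) :
    |t| ^ q ≤ M ^ (q - 2) * t ^ 2 := by
  rcases eq_or_ne t 0 with rfl | hne
  · rw [abs_zero, Real.zero_rpow (by linarith : q ≠ 0)]
    simp
  · have h0 : 0 < |t| := abs_pos.2 hne
    have hsplit : |t| ^ q = |t| ^ (q - 2) * |t| ^ (2:ℝ) := by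
      rw [← Real.rpow_add h0]; ring_nf
    rw [hsplit, rpow_two_eq (abs_nonneg t), sq_abs]
    have h1 : |t| ^ (q - 2) ≤ M ^ (q - 2) :=
      Real.rpow_le_rpow h0.le hM (by linarith)
    exact mul_le_mul_of_nonneg_right h1 (sq_nonneg t)

lemma logTerm_abs_le {p : ℝ} (hp : 2 < p) (t : ℝ) :
    |logTerm p t| ≤ 2 * |t| ^ (p - 1) + 2 * |t| ^ (p + 1) := by
  rcases eq_or_ne t 0 with rfl | hne
  · simp only [logTerm, if_pos rfl, abs_zero]
    norm_num [Real.zero_rpow (show p - 1 ≠ 0 by linarith),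
      Real.zero_rpow (show p + 1 ≠ 0 by linarith)]
  · have h0 : 0 < |t| := abs_pos.2 hne
    rw [logTerm, if_neg hne, abs_mul]
    rw [abs_of_nonneg (Real.rpow_nonneg (abs_nonneg t) p)]
    have hlog : Real.log (t ^ 2) = 2 * Real.log |t| := by
      rw [Real.log_pow, Real.log_abs]; norm_num
    rw [hlog, abs_mul]
    rw [abs_of_nonneg (by norm_num : (0:ℝ) ≤ 2)]
    rcases le_total (abs t) 1 with hle | hge
    · have hlt : |Real.log (|t|)| ≤ |t|⁻¹ := by
        have hlog2 : Real.log |t| ≤ 0 := Real.log_nonpos (abs_nonneg t) hle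
        rw [abs_of_nonpos hlog2, ← Real.log_inv]
        have := Real.log_le_sub_one_of_pos (by positivity : (0:ℝ) < |t|⁻¹)
        linarith
      have hb : |t| ^ p * (2 * |Real.log (|t|)|) ≤ 2 * (|t| ^ p * |t|⁻¹) := by
        have := mul_le_mul_of_nonneg_left hlt
          (by positivity : (0:ℝ) ≤ 2 * |t| ^ p)
        nlinarith [this]
      have he : |t| ^ p * |t|⁻¹ = |t| ^ (p - 1) := by
        rw [Real.rpow_sub h0, Real.rpow_one, div_eq_mul_inv]
      rw [he] at hb
      have hnn : (0:ℝ) ≤ |t| ^ (p + 1) := Real.rpow_nonneg (abs_nonneg t) (p + 1)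
      linarith
    · have hlt : |Real.log (|t|)| ≤ |t| := by
        have hlog2 : 0 ≤ Real.log |t| := Real.log_nonneg hge
        rw [abs_of_nonneg hlog2]
        have := Real.log_le_sub_one_of_pos h0
        linarith
      have hb : |t| ^ p * (2 * |Real.log (|t|)|) ≤ 2 * (|t| ^ p * |t|) := by
        have := mul_le_mul_of_nonneg_left hlt
          (by positivity : (0:ℝ) ≤ 2 * |t| ^ p)
        nlinarith [this]
      have he : |t| ^ p * |t| = |t| ^ (p + 1) := by
        rw [Real.rpow_add h0, Real.rpow_one]
      rw [he] at hb
      have hnn : (0:ℝ) ≤ |t| ^ (p - 1) := Real.rpow_nonneg (abs_nonneg t) (p - 1)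
      linarith

lemma nlTerm_mul_self {p : ℝ} (hp : 2 < p) (t : ℝ) : nlTerm p t * t = logTerm p t := by
  rcases eq_or_ne t 0 with rfl | hne
  · simp [nlTerm, logTerm]
  · rw [nlTerm, logTerm, if_neg hne, if_neg hne]
    have h0 : 0 < |t| := abs_pos.2 hne
    have h2 : |t| ^ (p - 2) * |t| ^ (2:ℝ) = |t| ^ p := by
      rw [← Real.rpow_add h0]; ring_nf
    have h3 : |t| ^ (2:ℝ) = t * t := by
      rw [rpow_two_eq (abs_nonneg t), sq_abs, sq]
    rw [h3] at h2
    linear_combination Real.log (t ^ 2) * h2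
lemma nlTerm_mul_pos {p : ℝ} (hp : 2 < p) (u : V → ℝ) (x : V) :
    nlTerm p (u x) * pos u x = logTerm p (pos u x) := by
  rcases lt_trichotomy (u x) 0 with hx | hx | hx
  · have h1 : pos u x = 0 := by simp [pos, max_eq_right hx.le]
    rw [h1, mul_zero, logTerm, if_pos rfl]
  · rw [hx]
    have h1 : pos u x = 0 := by simp [pos, hx]
    rw [h1, mul_zero, logTerm, if_pos rfl]
  · have h1 : pos u x = u x := by simp [pos, max_eq_left hx.le]
    rw [h1, nlTerm_mul_self hp]

lemma nlTerm_mul_neg {p : ℝ} (hp : 2 < p) (u : V → ℝ) (x : V) :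
    nlTerm p (u x) * neg u x = logTerm p (neg u x) := by
  rcases lt_trichotomy (u x) 0 with hx | hx | hx
  · have h1 : neg u x = u x := by simp [neg, min_eq_left hx.le]
    rw [h1, nlTerm_mul_self hp]
  · rw [hx]
    have h1 : neg u x = 0 := by simp [neg, hx]
    rw [h1, mul_zero, logTerm, if_pos rfl]
  · have h1 : neg u x = 0 := by simp [neg, min_eq_right hx.le]
    rw [h1, mul_zero, logTerm, if_pos rfl]

lemma abs_rpow_split {p : ℝ} (hp : 0 < p) (u : V → ℝ) (x : V) :
    |u x| ^ p = |pos u x| ^ p + |neg u x| ^ p := by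
  rcases le_total (u x) 0 with hx | hx
  · have h1 : pos u x = 0 := by simp [pos, max_eq_right hx]
    have h2 : neg u x = u x := by simp [neg, min_eq_left hx]
    rw [h1, h2, abs_zero, Real.zero_rpow (ne_of_gt hp)]; ring
  · have h1 : pos u x = u x := by simp [pos, max_eq_left hx]
    have h2 : neg u x = 0 := by simp [neg, min_eq_right hx]
    rw [h1, h2, abs_zero, Real.zero_rpow (ne_of_gt hp)]; ring

lemma logTerm_zero (p : ℝ) : logTerm p 0 = 0 := by simp [logTerm]

lemma logTerm_split (p : ℝ) (u : V → ℝ) (x : V) :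
    logTerm p (u x) = logTerm p (pos u x) + logTerm p (neg u x) := by
  rcases le_total (u x) 0 with hx | hx
  · have h1 : pos u x = 0 := by simp [pos, max_eq_right hx]
    have h2 : neg u x = u x := by simp [neg, min_eq_left hx]
    rw [h1, h2, logTerm_zero]; ring
  · have h1 : pos u x = u x := by simp [pos, max_eq_left hx]
    have h2 : neg u x = 0 := by simp [neg, min_eq_right hx]
    rw [h1, h2, logTerm_zero]; ring

lemma abs_smul_rpow {p c : ℝ} (hc : 0 ≤ c) (v : ℝ) : |c * v| ^ p = c ^ p * |v| ^ p := by
  rw [abs_mul, abs_of_nonneg hc, Real.mul_rpow hc (abs_nonneg v)]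

lemma abs_rpow_combo {p s t : ℝ} (hp : 0 < p) (hs : 0 ≤ s) (ht : 0 ≤ t) (u : V → ℝ) (x : V) :
    |s * pos u x + t * neg u x| ^ p = s ^ p * |pos u x| ^ p + t ^ p * |neg u x| ^ p := by
  rcases le_total (u x) 0 with hx | hx
  · have h1 : pos u x = 0 := by simp [pos, max_eq_right hx]
    rw [h1, mul_zero, zero_add, abs_smul_rpow ht, abs_zero,
      Real.zero_rpow (ne_of_gt hp)]
    ring
  · have h2 : neg u x = 0 := by simp [neg, min_eq_right hx]
    rw [h2, mul_zero, add_zero, abs_smul_rpow hs, abs_zero,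
      Real.zero_rpow (ne_of_gt hp)]
    ring

lemma logTerm_smul {p c : ℝ} (hp : 0 < p) (hc : 0 < c) (v : ℝ) :
    logTerm p (c * v) = c ^ p * logTerm p v + Real.log (c ^ 2) * (c ^ p * |v| ^ p) := by
  rcases eq_or_ne v 0 with rfl | hv
  · simp [logTerm, Real.zero_rpow (ne_of_gt hp)]
  · have hcv : c * v ≠ 0 := mul_ne_zero (ne_of_gt hc) hv
    rw [logTerm, logTerm, if_neg hcv, if_neg hv]
    have h1 : ((c * v) ^ 2 : ℝ) = c ^ 2 * v ^ 2 := by ring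
    have h2 : Real.log (c ^ 2 * v ^ 2) = Real.log (c ^ 2) + Real.log (v ^ 2) := by
      apply Real.log_mul (by positivity) (by positivity)
    rw [h1, h2, abs_smul_rpow hc.le]
    ring

lemma logTerm_combo {p s t : ℝ} (hp : 0 < p) (hs : 0 < s) (ht : 0 < t) (u : V → ℝ) (x : V) :
    logTerm p (s * pos u x + t * neg u x)
      = (s ^ p * logTerm p (pos u x) + Real.log (s ^ 2) * (s ^ p * |pos u x| ^ p))
        + (t ^ p * logTerm p (neg u x) + Real.log (t ^ 2) * (t ^ p * |neg u x| ^ p)) := by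
  rcases le_total (u x) 0 with hx | hx
  · have h1 : pos u x = 0 := by simp [pos, max_eq_right hx]
    rw [h1, mul_zero, zero_add, logTerm_smul hp ht]
    simp [logTerm, Real.zero_rpow (ne_of_gt hp)]
  · have h2 : neg u x = 0 := by simp [neg, min_eq_right hx]
    rw [h2, mul_zero, add_zero, logTerm_smul hp hs]
    simp [logTerm, Real.zero_rpow (ne_of_gt hp)]
lemma kirch_ineq {p s t Bp Bn B0 b : ℝ} (hp : 6 < p) (hb : 0 < b) (hs : 0 < s) (ht : 0 < t)
    (hBp : 0 ≤ Bp) (hBn : 0 ≤ Bn) (hB0 : 0 ≤ B0) :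
    0 ≤ b / 4 * ((Bp + 2 * B0 + Bn) ^ 2 - (s ^ 2 * Bp + 2 * (s * t) * B0 + t ^ 2 * Bn) ^ 2)
      + b / p * (Bp + 2 * B0 + Bn)
          * ((Bp + B0) * (s ^ p - 1) + (Bn + B0) * (t ^ p - 1)) := by
  have hp0 : (0:ℝ) < p := by linarith
  set B : ℝ := Bp + 2 * B0 + Bn with hB
  set Q : ℝ := s ^ 2 * Bp + 2 * (s * t) * B0 + t ^ 2 * Bn with hQ
  set X : ℝ := s ^ 2 * (Bp + B0) + t ^ 2 * (Bn + B0) with hX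
  set R : ℝ := s ^ p * (Bp + B0) + t ^ p * (Bn + B0) with hR
  have hBnn : 0 ≤ B := by rw [hB]; linarith
  have hQ0 : 0 ≤ Q := by rw [hQ]; positivity
  have hQX : Q ≤ X := by rw [hQ, hX]; nlinarith [sq_nonneg (s - t), hB0]
  have hX0 : 0 ≤ X := le_trans hQ0 hQX
  have hgoal : (Bp + B0) * (s ^ p - 1) + (Bn + B0) * (t ^ p - 1) = R - B := by
    rw [hR, hB]; ring
  rw [hgoal]
  rcases eq_or_lt_of_le hBnn with hB0eq | hBpos
  · -- B = 0 forces all pieces to vanish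
    have h1 : Bp = 0 := by rw [hB] at hB0eq; linarith
    have h2 : Bn = 0 := by rw [hB] at hB0eq; linarith
    have h3 : B0 = 0 := by rw [hB] at hB0eq; linarith
    have hQz : Q = 0 := by rw [hQ, h1, h2, h3]; ring
    have hRz : R = 0 := by rw [hR, h1, h2, h3]; ring
    rw [hQz, hRz, ← hB0eq]
    norm_num
  · -- Jensen (convexity of x ↦ x^(p/2)): (X/B)^(p/2) ≤ R/B
    have hsp : ((s:ℝ) ^ 2) ^ (p / 2) = s ^ p := by
      rw [sq_rpow_eq hs.le]; congr 1; ring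
    have htp : ((t:ℝ) ^ 2) ^ (p / 2) = t ^ p := by
      rw [sq_rpow_eq ht.le]; congr 1; ring
    have hwsum : (Bp + B0) / B + (Bn + B0) / B = 1 := by
      field_simp [hB]; ring
    have hjen := (convexOn_rpow (show (1:ℝ) ≤ p / 2 by linarith)).2
      (Set.mem_Ici.2 (sq_nonneg s)) (Set.mem_Ici.2 (sq_nonneg t))
      (div_nonneg (by linarith) hBnn) (div_nonneg (by linarith) hBnn) hwsum
    simp only [smul_eq_mul] at hjen
    rw [hsp, htp] at hjen
    have hXB : (Bp + B0) / B * s ^ 2 + (Bn + B0) / B * t ^ 2 = X / B := by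
      rw [hX]; field_simp
    have hRB : (Bp + B0) / B * s ^ p + (Bn + B0) / B * t ^ p = R / B := by
      rw [hR]; field_simp
    rw [hXB, hRB] at hjen
    -- Bernoulli : (X/B)^(p/2) ≥ 1 + (p/4)((X/B)^2 - 1)
    set y : ℝ := X / B with hy
    have hy0 : 0 ≤ y := div_nonneg hX0 hBnn
    have hbern : 1 + (p / 4) * (y ^ 2 - 1) ≤ y ^ (p / 2) := by
      have hb2 := one_add_mul_self_le_rpow_one_add
        (show (-1:ℝ) ≤ y ^ 2 - 1 by nlinarith [sq_nonneg y])
        (show (1:ℝ) ≤ p / 4 by linarith)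
      have he : (1:ℝ) + (y ^ 2 - 1) = y ^ 2 := by ring
      rw [he, sq_rpow_eq hy0] at hb2
      have : 2 * (p / 4) = p / 2 := by ring
      rw [this] at hb2
      exact hb2
    have hchain : 1 + (p / 4) * (y ^ 2 - 1) ≤ R / B := le_trans hbern hjen
    have hRge : (1 + (p / 4) * (y ^ 2 - 1)) * B ≤ R := by
      rw [← le_div_iff₀ hBpos]
      exact hchain
    have hkey : b / p * B * ((1 + (p / 4) * (y ^ 2 - 1)) * B - B) = b / 4 * (X ^ 2 - B ^ 2) := by
      rw [hy]
      field_simp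
      ring
    have hbpB : 0 ≤ b / p * B := mul_nonneg (le_of_lt (div_pos hb hp0)) hBnn
    have hmono : b / p * B * ((1 + (p / 4) * (y ^ 2 - 1)) * B - B) ≤ b / p * B * (R - B) :=
      mul_le_mul_of_nonneg_left (by linarith) hbpB
    rw [hkey] at hmono
    have hsq : Q ^ 2 ≤ X ^ 2 := pow_le_pow_left₀ hQ0 hQX 2
    have hquad : b / 4 * (B ^ 2 - X ^ 2) ≤ b / 4 * (B ^ 2 - Q ^ 2) :=
      mul_le_mul_of_nonneg_left (by linarith) (by linarith)
    linarith
lemma gradSq_decomp (u : V → ℝ) (x : V) :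
    gradSq u x = gradSq (pos u) x + 2 * gradForm (pos u) (neg u) x + gradSq (neg u) x := by
  have hrw : u = fun z => 1 * pos u z + 1 * neg u z := by
    funext z; rw [one_mul, one_mul, pos_add_neg]
  conv_lhs => rw [hrw]
  rw [gradSq_expand]; ring

lemma gradForm_self_pos (u : V → ℝ) (x : V) :
    gradForm u (pos u) x = gradSq (pos u) x + gradForm (pos u) (neg u) x := by
  rw [gradForm_decomp_left u (pos u) x, gradForm_comm (neg u) (pos u)]
  unfold gradSq
  ring

lemma gradForm_self_neg (u : V → ℝ) (x : V) :
    gradForm u (neg u) x = gradSq (neg u) x + gradForm (pos u) (neg u) x := by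
  rw [gradForm_decomp_left u (neg u) x]
  unfold gradSq
  ring
set_option maxHeartbeats 1000000 in
/-- strict maximality of u over su⁺ + tu⁻ on M_λ. -/
theorem stmt10 (a b p lam : ℝ) (ha : 0 < a) (hb : 0 < b) (hp : 6 < p) (hlam : 0 < lam)
    (h : V → ℝ) (hh : ∀ x, 0 ≤ h x) (u : V → ℝ) (hu : u ∈ MSet a b p lam h)
    (s t : ℝ) (hs : 0 < s) (ht : 0 < t) (hst : (s, t) ≠ (1, 1)) :
    Jlam a b p lam h (fun x => s * pos u x + t * neg u x) < Jlam a b p lam h u := by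
  obtain ⟨⟨hsum1, hsum2⟩, hupne, hunne, hCp, hCn⟩ := hu
  have hp0 : (0:ℝ) < p := by linarith
  have hp2 : (2:ℝ) < p := by linarith
  have hhl : ∀ x, 0 ≤ hl lam h x := by
    intro x
    have := mul_nonneg hlam.le (hh x)
    unfold hl; linarith
  -- ## Summability of all the pieces
  have sumGrad : Summable (fun x => gradSq u x) :=
    Summable.of_nonneg_of_le (fun x => gradSq_nonneg u x)
      (fun x => le_add_of_nonneg_right (sq_nonneg _)) hsum1
  have sumSq : Summable (fun x => u x ^ 2) :=
    Summable.of_nonneg_of_le (fun x => sq_nonneg _)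
      (fun x => le_add_of_nonneg_left (gradSq_nonneg u x)) hsum1
  have sumGp : Summable (fun x => gradSq (pos u) x) := by
    apply Summable.of_nonneg_of_le (fun x => gradSq_nonneg _ x) _ sumGrad
    intro x
    have h1 := gradSq_decomp u x
    have h2 := gradForm_pos_neg_nonneg u x
    have h3 := gradSq_nonneg (neg u) x
    linarith
  have sumGn : Summable (fun x => gradSq (neg u) x) := by
    apply Summable.of_nonneg_of_le (fun x => gradSq_nonneg _ x) _ sumGrad
    intro x
    have h1 := gradSq_decomp u x
    have h2 := gradForm_pos_neg_nonneg u x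
    have h3 := gradSq_nonneg (pos u) x
    linarith
  have sumGF : Summable (fun x => gradForm (pos u) (neg u) x) := by
    apply Summable.of_nonneg_of_le (fun x => gradForm_pos_neg_nonneg u x) _ sumGrad
    intro x
    have h1 := gradSq_decomp u x
    have h2 := gradForm_pos_neg_nonneg u x
    have h3 := gradSq_nonneg (pos u) x
    have h4 := gradSq_nonneg (neg u) x
    linarith
  have sumSqp : Summable (fun x => pos u x ^ 2) := by
    apply Summable.of_nonneg_of_le (fun x => sq_nonneg _) _ sumSq
    intro x
    have h1 := pos_sq_add_neg_sq u x
    have h2 := sq_nonneg (neg u x)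
    linarith
  have sumSqn : Summable (fun x => neg u x ^ 2) := by
    apply Summable.of_nonneg_of_le (fun x => sq_nonneg _) _ sumSq
    intro x
    have h1 := pos_sq_add_neg_sq u x
    have h2 := sq_nonneg (pos u x)
    linarith
  have sumHp : Summable (fun x => hl lam h x * pos u x ^ 2) := by
    apply Summable.of_nonneg_of_le
      (fun x => mul_nonneg (hhl x) (sq_nonneg _)) _
      ((hsum2.mul_left lam).add sumSq)
    intro x
    have h1 : pos u x ^ 2 ≤ u x ^ 2 := by
      have := pos_sq_add_neg_sq u x; have := sq_nonneg (neg u x); linarith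
    have h2 : 0 ≤ lam * h x := mul_nonneg hlam.le (hh x)
    unfold hl
    nlinarith [h1, h2]
  have sumHn : Summable (fun x => hl lam h x * neg u x ^ 2) := by
    apply Summable.of_nonneg_of_le
      (fun x => mul_nonneg (hhl x) (sq_nonneg _)) _
      ((hsum2.mul_left lam).add sumSq)
    intro x
    have h1 : neg u x ^ 2 ≤ u x ^ 2 := by
      have := pos_sq_add_neg_sq u x; have := sq_nonneg (pos u x); linarith
    have h2 : 0 ≤ lam * h x := mul_nonneg hlam.le (hh x)
    unfold hl
    nlinarith [h1, h2]
  have sumNp : Summable (fun x => a * gradSq (pos u) x + hl lam h x * pos u x ^ 2) :=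
    (sumGp.mul_left a).add sumHp
  have sumNn : Summable (fun x => a * gradSq (neg u) x + hl lam h x * neg u x ^ 2) :=
    (sumGn.mul_left a).add sumHn
  -- uniform bound on |u|
  set M : ℝ := Real.sqrt (∑' x, u x ^ 2) with hMdef
  have hMb : ∀ x, |u x| ≤ M := by
    intro x
    have h1 : u x ^ 2 ≤ ∑' x, u x ^ 2 := Summable.le_tsum sumSq x (fun j _ => sq_nonneg _)
    have h2 := Real.sqrt_le_sqrt h1
    rwa [Real.sqrt_sq_eq_abs] at h2
  have hMp : ∀ x, |pos u x| ≤ M := fun x => le_trans (abs_pos_le_abs u x) (hMb x)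
  have hMn : ∀ x, |neg u x| ≤ M := fun x => le_trans (abs_neg_le_abs u x) (hMb x)
  -- summability of p-th powers
  have sumPp : Summable (fun x => |pos u x| ^ p) :=
    Summable.of_nonneg_of_le (fun x => Real.rpow_nonneg (abs_nonneg _) p)
      (fun x => abs_rpow_le_of_le hp2 (pos u x) (hMp x))
      (sumSqp.mul_left (M ^ (p - 2)))
  have sumPn : Summable (fun x => |neg u x| ^ p) :=
    Summable.of_nonneg_of_le (fun x => Real.rpow_nonneg (abs_nonneg _) p)
      (fun x => abs_rpow_le_of_le hp2 (neg u x) (hMn x))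
      (sumSqn.mul_left (M ^ (p - 2)))
  -- summability of log terms
  have sumLp : Summable (fun x => logTerm p (pos u x)) := by
    apply Summable.of_abs
    apply Summable.of_nonneg_of_le (fun x => abs_nonneg _) _
      (sumSqp.mul_left (2 * M ^ (p - 1 - 2) + 2 * M ^ (p + 1 - 2)))
    intro x
    have hlb := logTerm_abs_le hp2 (pos u x)
    have b1 := abs_rpow_le_of_le (show (2:ℝ) < p - 1 by linarith) (pos u x) (hMp x)
    have b2 := abs_rpow_le_of_le (show (2:ℝ) < p + 1 by linarith) (pos u x) (hMp x)
    have e : (2 * M ^ (p - 1 - 2) + 2 * M ^ (p + 1 - 2)) * pos u x ^ 2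
        = 2 * (M ^ (p - 1 - 2) * pos u x ^ 2) + 2 * (M ^ (p + 1 - 2) * pos u x ^ 2) := by
      ring
    rw [e]
    linarith
  have sumLn : Summable (fun x => logTerm p (neg u x)) := by
    apply Summable.of_abs
    apply Summable.of_nonneg_of_le (fun x => abs_nonneg _) _
      (sumSqn.mul_left (2 * M ^ (p - 1 - 2) + 2 * M ^ (p + 1 - 2)))
    intro x
    have hlb := logTerm_abs_le hp2 (neg u x)
    have b1 := abs_rpow_le_of_le (show (2:ℝ) < p - 1 by linarith) (neg u x) (hMn x)
    have b2 := abs_rpow_le_of_le (show (2:ℝ) < p + 1 by linarith) (neg u x) (hMn x)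
    have e : (2 * M ^ (p - 1 - 2) + 2 * M ^ (p + 1 - 2)) * neg u x ^ 2
        = 2 * (M ^ (p - 1 - 2) * neg u x ^ 2) + 2 * (M ^ (p + 1 - 2) * neg u x ^ 2) := by
      ring
    rw [e]
    linarith
  -- ## Names for the basic quantities
  set Bp : ℝ := ∑' x, gradSq (pos u) x with hBpdef
  set Bn : ℝ := ∑' x, gradSq (neg u) x with hBndef
  set B0 : ℝ := ∑' x, gradForm (pos u) (neg u) x with hB0def
  set Np : ℝ := ∑' x, (a * gradSq (pos u) x + hl lam h x * pos u x ^ 2) with hNpdef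
  set Nn : ℝ := ∑' x, (a * gradSq (neg u) x + hl lam h x * neg u x ^ 2) with hNndef
  set Pp : ℝ := ∑' x, |pos u x| ^ p with hPpdef
  set Pn : ℝ := ∑' x, |neg u x| ^ p with hPndef
  set Lp : ℝ := ∑' x, logTerm p (pos u x) with hLpdef
  set Ln : ℝ := ∑' x, logTerm p (neg u x) with hLndef
  -- ## tsum decompositions
  have EB : (∑' x, gradSq u x) = Bp + 2 * B0 + Bn := by
    rw [tsum_congr (gradSq_decomp u),
      Summable.tsum_add (sumGp.add (sumGF.mul_left 2)) sumGn,
      Summable.tsum_add sumGp (sumGF.mul_left 2), tsum_mul_left]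
  have EH : normHlamSq a lam h u = Np + Nn + 2 * a * B0 := by
    unfold normHlamSq
    have hpt : ∀ x, a * gradSq u x + hl lam h x * u x ^ 2
        = (a * gradSq (pos u) x + hl lam h x * pos u x ^ 2)
          + (a * gradSq (neg u) x + hl lam h x * neg u x ^ 2)
          + (2 * a) * gradForm (pos u) (neg u) x := by
      intro x
      rw [gradSq_decomp u x, ← pos_sq_add_neg_sq u x]; ring
    rw [tsum_congr hpt, Summable.tsum_add (sumNp.add sumNn) (sumGF.mul_left (2 * a)),
      Summable.tsum_add sumNp sumNn, tsum_mul_left]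
  have EGp : (∑' x, gradForm u (pos u) x) = Bp + B0 := by
    rw [tsum_congr (gradForm_self_pos u), Summable.tsum_add sumGp sumGF]
  have EGn : (∑' x, gradForm u (neg u) x) = Bn + B0 := by
    rw [tsum_congr (gradForm_self_neg u), Summable.tsum_add sumGn sumGF]
  have E1p : (∑' x, (a * gradForm u (pos u) x + hl lam h x * u x * pos u x))
      = Np + a * B0 := by
    have hpt : ∀ x, a * gradForm u (pos u) x + hl lam h x * u x * pos u x
        = (a * gradSq (pos u) x + hl lam h x * pos u x ^ 2)
          + a * gradForm (pos u) (neg u) x := by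
      intro x
      rw [gradForm_self_pos u x, mul_assoc (hl lam h x), mul_pos_self u x]
      ring
    rw [tsum_congr hpt, Summable.tsum_add sumNp (sumGF.mul_left a), tsum_mul_left]
  have E1n : (∑' x, (a * gradForm u (neg u) x + hl lam h x * u x * neg u x))
      = Nn + a * B0 := by
    have hpt : ∀ x, a * gradForm u (neg u) x + hl lam h x * u x * neg u x
        = (a * gradSq (neg u) x + hl lam h x * neg u x ^ 2)
          + a * gradForm (pos u) (neg u) x := by
      intro x
      rw [gradForm_self_neg u x, mul_assoc (hl lam h x), mul_neg_self u x]
      ring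
    rw [tsum_congr hpt, Summable.tsum_add sumNn (sumGF.mul_left a), tsum_mul_left]
  have ELp : (∑' x, nlTerm p (u x) * pos u x) = Lp :=
    tsum_congr (nlTerm_mul_pos hp2 u)
  have ELn : (∑' x, nlTerm p (u x) * neg u x) = Ln :=
    tsum_congr (nlTerm_mul_neg hp2 u)
  -- ## the Nehari constraints, rewritten
  have hC1 : Np + a * B0 + b * (Bp + 2 * B0 + Bn) * (Bp + B0) - Lp = 0 := by
    unfold Jp at hCp
    rw [E1p, EB, EGp, ELp] at hCp
    linarith [hCp]
  have hC2 : Nn + a * B0 + b * (Bp + 2 * B0 + Bn) * (Bn + B0) - Ln = 0 := by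
    unfold Jp at hCn
    rw [E1n, EB, EGn, ELn] at hCn
    linarith [hCn]
  -- ## value of J on u
  have EPu : (∑' x, |u x| ^ p) = Pp + Pn := by
    rw [tsum_congr (abs_rpow_split hp0 u), Summable.tsum_add sumPp sumPn]
  have ELu : (∑' x, logTerm p (u x)) = Lp + Ln := by
    rw [tsum_congr (logTerm_split p u), Summable.tsum_add sumLp sumLn]
  have hJu : Jlam a b p lam h u
      = 1 / 2 * (Np + Nn + 2 * a * B0) + b / 4 * (Bp + 2 * B0 + Bn) ^ 2
        + 2 / p ^ 2 * (Pp + Pn) - 1 / p * (Lp + Ln) := by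
    unfold Jlam
    rw [EH, EB, EPu, ELu]
  -- ## value of J on w = s u⁺ + t u⁻
  set w : V → ℝ := fun x => s * pos u x + t * neg u x with hwdef
  have hgw : ∀ x, gradSq w x
      = s ^ 2 * gradSq (pos u) x + 2 * (s * t) * gradForm (pos u) (neg u) x
        + t ^ 2 * gradSq (neg u) x := by
    intro x
    rw [hwdef]
    exact gradSq_expand s t (pos u) (neg u) x
  have hsqw : ∀ x, w x ^ 2 = s ^ 2 * pos u x ^ 2 + t ^ 2 * neg u x ^ 2 := by
    intro x
    rw [hwdef]
    simp only
    linear_combination (2 * s * t) * pos_mul_neg u x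
  have habsw : ∀ x, |w x| ^ p = s ^ p * |pos u x| ^ p + t ^ p * |neg u x| ^ p := by
    intro x
    rw [hwdef]
    exact abs_rpow_combo hp0 hs.le ht.le u x
  have hlogw : ∀ x, logTerm p (w x)
      = (s ^ p * logTerm p (pos u x) + Real.log (s ^ 2) * (s ^ p * |pos u x| ^ p))
        + (t ^ p * logTerm p (neg u x) + Real.log (t ^ 2) * (t ^ p * |neg u x| ^ p)) := by
    intro x
    rw [hwdef]
    exact logTerm_combo hp0 hs ht u x
  have EGw : (∑' x, gradSq w x) = s ^ 2 * Bp + 2 * (s * t) * B0 + t ^ 2 * Bn := by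
    rw [tsum_congr hgw,
      Summable.tsum_add ((sumGp.mul_left (s ^ 2)).add (sumGF.mul_left (2 * (s * t))))
        (sumGn.mul_left (t ^ 2)),
      Summable.tsum_add (sumGp.mul_left (s ^ 2)) (sumGF.mul_left (2 * (s * t))),
      tsum_mul_left, tsum_mul_left, tsum_mul_left]
  have EHw : normHlamSq a lam h w
      = s ^ 2 * Np + t ^ 2 * Nn + 2 * (s * t) * (a * B0) := by
    unfold normHlamSq
    have hpt : ∀ x, a * gradSq w x + hl lam h x * w x ^ 2
        = s ^ 2 * (a * gradSq (pos u) x + hl lam h x * pos u x ^ 2)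
          + t ^ 2 * (a * gradSq (neg u) x + hl lam h x * neg u x ^ 2)
          + (2 * (s * t) * a) * gradForm (pos u) (neg u) x := by
      intro x
      rw [hgw x, hsqw x]; ring
    rw [tsum_congr hpt,
      Summable.tsum_add ((sumNp.mul_left (s ^ 2)).add (sumNn.mul_left (t ^ 2)))
        (sumGF.mul_left (2 * (s * t) * a)),
      Summable.tsum_add (sumNp.mul_left (s ^ 2)) (sumNn.mul_left (t ^ 2)),
      tsum_mul_left, tsum_mul_left, tsum_mul_left]
    ring
  have EPw : (∑' x, |w x| ^ p) = s ^ p * Pp + t ^ p * Pn := by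
    rw [tsum_congr habsw, Summable.tsum_add (sumPp.mul_left (s ^ p)) (sumPn.mul_left (t ^ p)),
      tsum_mul_left, tsum_mul_left]
  have ELw : (∑' x, logTerm p (w x))
      = (s ^ p * Lp + Real.log (s ^ 2) * (s ^ p * Pp))
        + (t ^ p * Ln + Real.log (t ^ 2) * (t ^ p * Pn)) := by
    rw [tsum_congr hlogw,
      Summable.tsum_add ((sumLp.mul_left (s ^ p)).add ((sumPp.mul_left (s ^ p)).mul_left
          (Real.log (s ^ 2))))
        ((sumLn.mul_left (t ^ p)).add ((sumPn.mul_left (t ^ p)).mul_left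
          (Real.log (t ^ 2)))),
      Summable.tsum_add (sumLp.mul_left (s ^ p)) ((sumPp.mul_left (s ^ p)).mul_left
        (Real.log (s ^ 2))),
      Summable.tsum_add (sumLn.mul_left (t ^ p)) ((sumPn.mul_left (t ^ p)).mul_left
        (Real.log (t ^ 2))),
      tsum_mul_left, tsum_mul_left, tsum_mul_left, tsum_mul_left, tsum_mul_left,
      tsum_mul_left]
  have hJw : Jlam a b p lam h w
      = 1 / 2 * (s ^ 2 * Np + t ^ 2 * Nn + 2 * (s * t) * (a * B0))
        + b / 4 * (s ^ 2 * Bp + 2 * (s * t) * B0 + t ^ 2 * Bn) ^ 2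
        + 2 / p ^ 2 * (s ^ p * Pp + t ^ p * Pn)
        - 1 / p * ((s ^ p * Lp + Real.log (s ^ 2) * (s ^ p * Pp))
            + (t ^ p * Ln + Real.log (t ^ 2) * (t ^ p * Pn))) := by
    unfold Jlam
    rw [EHw, EGw, EPw, ELw]
  -- ## nonnegativity and positivity facts
  have hBp0 : 0 ≤ Bp := tsum_nonneg (fun x => gradSq_nonneg _ x)
  have hBn0 : 0 ≤ Bn := tsum_nonneg (fun x => gradSq_nonneg _ x)
  have hB00 : 0 ≤ B0 := tsum_nonneg (fun x => gradForm_pos_neg_nonneg u x)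
  have hNp0 : 0 ≤ Np := tsum_nonneg (fun x =>
    add_nonneg (mul_nonneg ha.le (gradSq_nonneg _ x)) (mul_nonneg (hhl x) (sq_nonneg _)))
  have hNn0 : 0 ≤ Nn := tsum_nonneg (fun x =>
    add_nonneg (mul_nonneg ha.le (gradSq_nonneg _ x)) (mul_nonneg (hhl x) (sq_nonneg _)))
  have hPp0 : 0 < Pp := by
    obtain ⟨x0, hx0⟩ : ∃ x, pos u x ≠ 0 := by
      by_contra hcon
      push_neg at hcon
      exact hupne (funext hcon)
    have h1 : 0 < |pos u x0| ^ p := Real.rpow_pos_of_pos (abs_pos.2 hx0) p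
    have h2 := Summable.le_tsum sumPp x0 (fun j _ => Real.rpow_nonneg (abs_nonneg _) p)
    rw [hPpdef]
    linarith
  have hPn0 : 0 < Pn := by
    obtain ⟨x0, hx0⟩ : ∃ x, neg u x ≠ 0 := by
      by_contra hcon
      push_neg at hcon
      exact hunne (funext hcon)
    have h1 : 0 < |neg u x0| ^ p := Real.rpow_pos_of_pos (abs_pos.2 hx0) p
    have h2 := Summable.le_tsum sumPn x0 (fun j _ => Real.rpow_nonneg (abs_nonneg _) p)
    rw [hPndef]
    linarith
  -- ## scalar inequalities
  have hψs : 0 ≤ 1 / 2 - 1 / p - s ^ 2 / 2 + s ^ p / p := psi_nonneg hp2 hs.le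
  have hψt : 0 ≤ 1 / 2 - 1 / p - t ^ 2 / 2 + t ^ p / p := psi_nonneg hp2 ht.le
  have hφs : 0 ≤ 2 / p ^ 2 * (1 - s ^ p) + 1 / p * (s ^ p * Real.log (s ^ 2)) :=
    phi_nonneg hp0 hs
  have hφt : 0 ≤ 2 / p ^ 2 * (1 - t ^ p) + 1 / p * (t ^ p * Real.log (t ^ 2)) :=
    phi_nonneg hp0 ht
  have hK := kirch_ineq hp hb hs ht hBp0 hBn0 hB00
  -- ## the master identity
  have hmain : Jlam a b p lam h u - Jlam a b p lam h w
      = Np * (1 / 2 - 1 / p - s ^ 2 / 2 + s ^ p / p)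
        + Nn * (1 / 2 - 1 / p - t ^ 2 / 2 + t ^ p / p)
        + (a * B0) * ((1 / 2 - 1 / p - s ^ 2 / 2 + s ^ p / p)
            + (1 / 2 - 1 / p - t ^ 2 / 2 + t ^ p / p) + (s - t) ^ 2 / 2)
        + (b / 4 * ((Bp + 2 * B0 + Bn) ^ 2
              - (s ^ 2 * Bp + 2 * (s * t) * B0 + t ^ 2 * Bn) ^ 2)
            + b / p * (Bp + 2 * B0 + Bn)
              * ((Bp + B0) * (s ^ p - 1) + (Bn + B0) * (t ^ p - 1)))
        + Pp * (2 / p ^ 2 * (1 - s ^ p) + 1 / p * (s ^ p * Real.log (s ^ 2)))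
        + Pn * (2 / p ^ 2 * (1 - t ^ p) + 1 / p * (t ^ p * Real.log (t ^ 2))) := by
    rw [hJu, hJw]
    linear_combination ((1 - s ^ p) / p) * hC1 + ((1 - t ^ p) / p) * hC2
  -- ## strict positivity of the φ–part
  have hne : s ≠ 1 ∨ t ≠ 1 := by
    by_contra hcon
    push_neg at hcon
    exact hst (by rw [hcon.1, hcon.2])
  have hφpos : 0 < Pp * (2 / p ^ 2 * (1 - s ^ p) + 1 / p * (s ^ p * Real.log (s ^ 2)))
      + Pn * (2 / p ^ 2 * (1 - t ^ p) + 1 / p * (t ^ p * Real.log (t ^ 2))) := by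
    rcases hne with hne | hne
    · exact add_pos_of_pos_of_nonneg (mul_pos hPp0 (phi_pos hp0 hs hne))
        (mul_nonneg hPn0.le hφt)
    · exact add_pos_of_nonneg_of_pos (mul_nonneg hPp0.le hφs)
        (mul_pos hPn0 (phi_pos hp0 ht hne))
  -- ## conclusion
  have t1 : 0 ≤ Np * (1 / 2 - 1 / p - s ^ 2 / 2 + s ^ p / p) := mul_nonneg hNp0 hψs
  have t2 : 0 ≤ Nn * (1 / 2 - 1 / p - t ^ 2 / 2 + t ^ p / p) := mul_nonneg hNn0 hψt
  have t3 : 0 ≤ (a * B0) * ((1 / 2 - 1 / p - s ^ 2 / 2 + s ^ p / p)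
      + (1 / 2 - 1 / p - t ^ 2 / 2 + t ^ p / p) + (s - t) ^ 2 / 2) := by
    apply mul_nonneg (mul_nonneg ha.le hB00)
    have := sq_nonneg (s - t)
    linarith
  linarith [hmain, t1, t2, t3, hK, hφpos]

end DiscreteKirchhoff
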